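/- Let d ≥ 2 be an integer and let s, p, p̃ ∈ [1,∞) be reals. Let s̄ ∈ [1, s) and let m̄, k ∈ ℕ satisfy m̄ < s/s̄ − 1 and k < s. Then there exist reals α, β, γ > 0 such that: (i) (α+1)·m̄ + (d−1)/p + β/s − β/s̄ < 0; (ii) α + 1 + (d−1)(1 − 1/p) − (d−1)/p̃ + β(1 − 1/s) − β < 0; (iii) γ + β/s < α + 1 + (d−1)(1 − 1/p); (iv) (α+1)(k−1) − (d−1)(1 − 1/p) − β(1 − 1/s) < 0. -/

import Mathlib

set_option maxHeartbeats 1000000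

theorem statement7 (d : ℕ) (hd : 2 ≤ d)
    (s p ptil : ℝ) (hs : 1 ≤ s) (hp : 1 ≤ p) (hpt : 1 ≤ ptil)
    (sbar : ℝ) (hsbar : 1 ≤ sbar) (hsbars : sbar < s) (mbar k : ℕ)
    (hm : (mbar : ℝ) < s / sbar - 1) (hk : (k : ℝ) < s) :
    ∃ α β γ : ℝ, 0 < α ∧ 0 < β ∧ 0 < γ ∧
      (α + 1) * (mbar : ℝ) + ((d : ℝ) - 1) / p + β / s - β / sbar < 0 ∧
      α + 1 + ((d : ℝ) - 1) * (1 - 1 / p) - ((d : ℝ) - 1) / ptil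
          + β * (1 - 1 / s) - β < 0 ∧
      γ + β / s < α + 1 + ((d : ℝ) - 1) * (1 - 1 / p) ∧
      (α + 1) * ((k : ℝ) - 1) - ((d : ℝ) - 1) * (1 - 1 / p) - β * (1 - 1 / s) < 0 := by
  have hd1 : (1:ℝ) ≤ (d:ℝ) - 1 := by
    have : (2:ℝ) ≤ (d:ℝ) := by exact_mod_cast hd
    linarith
  have hs1 : 1 < s := lt_of_le_of_lt hsbar hsbars
  have hp0 : (0:ℝ) < p := by linarith
  have hpt0 : (0:ℝ) < ptil := by linarith
  have hs0 : (0:ℝ) < s := by linarith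
  have hsb0 : (0:ℝ) < sbar := by linarith
  set ε := ((d:ℝ)-1)/(2*ptil) with hεdef
  set c := s/sbar - 1 with hcdef
  set q := ((d:ℝ)-1)*(1-1/p) with hqdef
  set r := ((d:ℝ)-1)/p with hrdef
  have hε0 : 0 < ε := by rw [hεdef]; positivity
  have hcm : (mbar:ℝ) < c := hm
  have hc0 : 0 < c := lt_of_le_of_lt (Nat.cast_nonneg mbar) hcm
  have hq0 : 0 ≤ q := by
    rw [hqdef]
    apply mul_nonneg (by linarith)
    have : 1/p ≤ 1 := by
      rw [div_le_one hp0]; linarith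
    linarith
  have hr0 : 0 ≤ r := by rw [hrdef]; positivity
  have hsk : 0 < s - (k:ℝ) := by linarith
  have hcm0 : 0 < c - (mbar:ℝ) := by linarith
  set A := (r + c*ε)/(c - (mbar:ℝ)) with hAdef
  set B := ε*(s-1)/(s-(k:ℝ)) with hBdef
  have hA0 : 0 < A := by rw [hAdef]; positivity
  have hB0 : 0 ≤ B := by
    rw [hBdef]
    apply div_nonneg _ hsk.le
    have : 0 ≤ s - 1 := by linarith
    positivity
  set t := 1 + ε + A + B with htdef
  have ht1 : 1 < t := by rw [htdef]; linarith
  have hAe : A * (c - (mbar:ℝ)) = r + c*ε := div_mul_cancel₀ _ hcm0.ne'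
  have hBe : B * (s - (k:ℝ)) = ε*(s-1) := div_mul_cancel₀ _ hsk.ne'
  have htqε : 0 < t + q - ε := by linarith
  have hβs : s*(t+q-ε)/s = t+q-ε := by field_simp
  have hssb : s/sbar = c + 1 := by rw [hcdef]; ring
  have hβsb : s*(t+q-ε)/sbar = (c+1)*(t+q-ε) := by
    rw [← hssb]; ring
  have h2ε : ((d:ℝ)-1)/ptil = 2*ε := by
    rw [hεdef]; field_simp
  refine ⟨t - 1, s*(t + q - ε), ε/2, by linarith, by positivity, by linarith, ?_, ?_, ?_, ?_⟩
  · -- (i)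
    have hexp : (t - 1 + 1) * (mbar:ℝ) + r + s*(t+q-ε)/s - s*(t+q-ε)/sbar
        = t*(mbar:ℝ) + r - c*(t+q-ε) := by
      rw [hβs, hβsb]; ring
    rw [hexp]
    have h1 : t * (c - (mbar:ℝ)) > A * (c - (mbar:ℝ)) := by
      have : A < t := by linarith
      exact mul_lt_mul_of_pos_right this hcm0
    have h2 : 0 ≤ c * q := mul_nonneg hc0.le hq0
    nlinarith [hAe]
  · -- (ii)
    have hexp : t - 1 + 1 + q - ((d:ℝ)-1)/ptil + s*(t+q-ε)*(1-1/s) - s*(t+q-ε)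
        = -ε := by
      have : s*(t+q-ε)*(1-1/s) = s*(t+q-ε) - s*(t+q-ε)/s := by ring
      rw [this, hβs, h2ε]; ring
    rw [hexp]; linarith
  · -- (iii)
    have hexp : ε/2 + s*(t+q-ε)/s = t + q - ε/2 := by rw [hβs]; ring
    rw [hexp]; linarith
  · -- (iv)
    have hexp : (t - 1 + 1) * ((k:ℝ)-1) - q - s*(t+q-ε)*(1-1/s)
        = t*((k:ℝ)-1) - q - (t+q-ε)*(s-1) := by
      have : s*(t+q-ε)*(1-1/s) = s*(t+q-ε) - s*(t+q-ε)/s := by ring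
      rw [this, hβs]; ring
    rw [hexp]
    have h1 : t * (s - (k:ℝ)) > B * (s - (k:ℝ)) := by
      have : B < t := by linarith
      exact mul_lt_mul_of_pos_right this hsk
    have h2 : 0 ≤ q * s := mul_nonneg hq0 hs0.le
    nlinarith [hBe]
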